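/- Let T > 0 and let k : ℝ → ℝ be an integrable function with k(−u) = k(u) for all u ∈ ℝ, k(u) = 0 whenever |u| > T, and ∫_ℝ k(u) du = 1. Let r ∈ ℝ, b > 0 and M ≥ 0, and let f : ℝ → ℝ be twice differentiable on the interval [r − Tb, r + Tb] with |f''(s)| ≤ M for all s ∈ [r − Tb, r + Tb]. Then |∫_ℝ k(u) f(r + ub) du − f(r)| ≤ b² · M · ∫_ℝ u² |k(u)| du. -/

import Mathlib

open MeasureTheory

/-- Taylor–Lagrange kernel-smoothing bias bound: for a symmetric integrable kernel `k`
supported in `[−T,T]` with `∫ k = 1`, and `f` twice differentiable on `[r − Tb, r + Tb]`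
with `|f''| ≤ M` there, one has `|∫ k(u) f(r + ub) du − f(r)| ≤ b² M ∫ u² |k(u)| du`. -/
theorem kernel_smoothing_bias_bound (T : ℝ) (hT : 0 < T) (k : ℝ → ℝ)
    (hk_int : Integrable k)
    (hk_even : ∀ u, k (-u) = k u)
    (hk_supp : ∀ u : ℝ, T < |u| → k u = 0)
    (hk_one : (∫ u, k u) = 1)
    (r b M : ℝ) (hb : 0 < b) (hM : 0 ≤ M)
    (f f' f'' : ℝ → ℝ)
    (hf' : ∀ s ∈ Set.Icc (r - T * b) (r + T * b),
      HasDerivWithinAt f (f' s) (Set.Icc (r - T * b) (r + T * b)) s)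
    (hf'' : ∀ s ∈ Set.Icc (r - T * b) (r + T * b),
      HasDerivWithinAt f' (f'' s) (Set.Icc (r - T * b) (r + T * b)) s)
    (hM' : ∀ s ∈ Set.Icc (r - T * b) (r + T * b), |f'' s| ≤ M) :
    |(∫ u, k u * f (r + u * b)) - f r| ≤ b ^ 2 * M * ∫ u, u ^ 2 * |k u| := by
  have hTb : 0 < T * b := mul_pos hT hb
  set I : Set ℝ := Set.Icc (r - T * b) (r + T * b) with hI
  have hle : r - T * b ≤ r + T * b := by linarith
  have hrI : r ∈ I := Set.mem_Icc.mpr ⟨by linarith, by linarith⟩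
  -- Taylor bound: |f x - f r - f' r (x - r)| ≤ M (x - r)^2 on I
  have key : ∀ x ∈ I, |f x - f r - f' r * (x - r)| ≤ M * (x - r) ^ 2 := by
    intro x hx
    have hlip : ∀ s ∈ I, |f' s - f' r| ≤ M * |s - r| := by
      intro s hs
      have := Convex.norm_image_sub_le_of_norm_hasDerivWithin_le hf''
        (fun t ht => by simpa [Real.norm_eq_abs] using hM' t ht) (convex_Icc _ _) hrI hs
      simpa [Real.norm_eq_abs] using this
    have hJI : Set.uIcc r x ⊆ I := Set.uIcc_subset_Icc hrI hx
    have habs : ∀ s ∈ Set.uIcc r x, |s - r| ≤ |x - r| := by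
      intro s hs
      rcases Set.mem_uIcc.mp hs with ⟨h1, h2⟩ | ⟨h1, h2⟩
      · rw [abs_of_nonneg (by linarith)]
        exact le_trans (by linarith) (le_abs_self _)
      · rw [abs_of_nonpos (by linarith)]
        calc -(s - r) ≤ -(x - r) := by linarith
          _ ≤ |x - r| := neg_le_abs _
    have hg : ∀ s ∈ Set.uIcc r x,
        HasDerivWithinAt (fun t => f t - f' r * (t - r)) (f' s - f' r) (Set.uIcc r x) s := by
      intro s hs
      have h1 : HasDerivWithinAt f (f' s) (Set.uIcc r x) s := (hf' s (hJI hs)).mono hJI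
      have h2 : HasDerivWithinAt (fun t => f' r * (t - r)) (f' r) (Set.uIcc r x) s := by
        simpa using (((hasDerivAt_id s).sub_const r).const_mul (f' r)).hasDerivWithinAt
      exact h1.sub h2
    have hbound : ∀ s ∈ Set.uIcc r x, ‖f' s - f' r‖ ≤ M * |x - r| := by
      intro s hs
      rw [Real.norm_eq_abs]
      exact (hlip s (hJI hs)).trans (mul_le_mul_of_nonneg_left (habs s hs) hM)
    have hmv := Convex.norm_image_sub_le_of_norm_hasDerivWithin_le hg hbound
      (convex_uIcc r x) Set.left_mem_uIcc Set.right_mem_uIcc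
    have h2 : |f x - f' r * (x - r) - (f r - f' r * (r - r))| ≤ M * |x - r| * ‖x - r‖ := hmv
    rw [show f x - f r - f' r * (x - r)
        = f x - f' r * (x - r) - (f r - f' r * (r - r)) by ring]
    calc |f x - f' r * (x - r) - (f r - f' r * (r - r))| ≤ M * |x - r| * ‖x - r‖ := h2
      _ = M * (x - r) ^ 2 := by
          rw [Real.norm_eq_abs, mul_assoc, ← abs_mul, ← sq, abs_sq]
  -- continuity and boundedness via IccExtend
  have hcont : ContinuousOn f I := fun s hs => (hf' s hs).continuousWithinAt
  set F : ℝ → ℝ := Set.IccExtend hle (I.restrict f) with hF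
  have hFcont : Continuous F :=
    Continuous.Icc_extend' (continuousOn_iff_continuous_restrict.mp hcont)
  have hFeq : ∀ x, x ∈ I → F x = f x := by
    intro x hx
    rw [hF, Set.IccExtend_of_mem hle _ hx]
    rfl
  obtain ⟨C, hC⟩ : ∃ C, ∀ u : ℝ, ‖F (r + u * b)‖ ≤ C := by
    obtain ⟨C, hC⟩ :=
      (isCompact_Icc (a := r - T * b) (b := r + T * b)).exists_bound_of_continuousOn hcont
    refine ⟨C, fun u => ?_⟩
    show ‖Set.IccExtend hle (I.restrict f) (r + u * b)‖ ≤ C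
    rw [Set.IccExtend_apply]
    exact hC _ (Set.projIcc (r - T * b) (r + T * b) hle (r + u * b)).2
  -- membership for |u| ≤ T
  have hmem : ∀ u : ℝ, |u| ≤ T → r + u * b ∈ I := by
    intro u hu
    have h1 : |u * b| ≤ T * b := by
      rw [abs_mul, abs_of_pos hb]
      exact mul_le_mul_of_nonneg_right hu hb.le
    rw [abs_le] at h1
    exact Set.mem_Icc.mpr ⟨by linarith [h1.1], by linarith [h1.2]⟩
  -- rewrite integrand using F
  have heq : (fun u => k u * f (r + u * b)) = fun u => k u * F (r + u * b) := by
    funext u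
    by_cases hku : k u = 0
    · simp [hku]
    · have hu : |u| ≤ T := le_of_not_gt fun h => hku (hk_supp u h)
      rw [hFeq _ (hmem u hu)]
  -- integrability facts
  have hmeasF : AEStronglyMeasurable (fun u => F (r + u * b)) volume :=
    (hFcont.comp (by continuity)).aestronglyMeasurable
  have h1 : Integrable (fun u => k u * F (r + u * b)) := by
    have := hk_int.bdd_mul (c := C) hmeasF (Filter.Eventually.of_forall hC)
    simpa [mul_comm] using this
  have h2 : Integrable (fun u => u * k u) := by
    refine (hk_int.norm.const_mul T).mono' (aestronglyMeasurable_id.mul hk_int.1) ?_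
    filter_upwards with u
    by_cases hku : k u = 0
    · simp [hku]
    · have hu : |u| ≤ T := le_of_not_gt fun h => hku (hk_supp u h)
      rw [Real.norm_eq_abs, abs_mul]
      exact mul_le_mul_of_nonneg_right hu (abs_nonneg _)
  have h3 : Integrable (fun u => u ^ 2 * |k u|) := by
    refine (hk_int.norm.const_mul (T ^ 2)).mono'
      ((measurable_id.pow_const 2).aestronglyMeasurable.mul hk_int.1.norm) ?_
    filter_upwards with u
    by_cases hku : k u = 0
    · simp [hku]
    · have hu : |u| ≤ T := le_of_not_gt fun h => hku (hk_supp u h)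
      rw [Real.norm_eq_abs, abs_mul, abs_abs, abs_pow, sq_abs]
      refine mul_le_mul_of_nonneg_right ?_ (abs_nonneg _)
      calc u ^ 2 = |u| ^ 2 := (sq_abs u).symm
        _ ≤ T ^ 2 := pow_le_pow_left₀ (abs_nonneg u) hu 2
  -- odd integral vanishes
  have hodd : (∫ u, u * k u) = 0 := by
    have h := MeasureTheory.integral_neg_eq_self (fun u => u * k u) volume
    simp only [hk_even, neg_mul] at h
    rw [integral_neg] at h
    linarith
  -- split the integral
  have hR : Integrable
      (fun u => k u * F (r + u * b) - f r * k u - (f' r * b) * (u * k u)) :=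
    (h1.sub (hk_int.const_mul (f r))).sub (h2.const_mul (f' r * b))
  have hval : (∫ u, (k u * F (r + u * b) - f r * k u - (f' r * b) * (u * k u)))
      = (∫ u, k u * F (r + u * b)) - f r := by
    have e1 : (∫ u, (k u * F (r + u * b) - f r * k u - (f' r * b) * (u * k u)))
        = (∫ u, (k u * F (r + u * b) - f r * k u)) - ∫ u, (f' r * b) * (u * k u) :=
      integral_sub (h1.sub (hk_int.const_mul (f r))) (h2.const_mul _)
    have e2 : (∫ u, (k u * F (r + u * b) - f r * k u))
        = (∫ u, k u * F (r + u * b)) - ∫ u, f r * k u :=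
      integral_sub h1 (hk_int.const_mul _)
    rw [e1, e2, integral_const_mul, integral_const_mul, hk_one, hodd]
    ring
  rw [heq, ← hval]
  have hpt : ∀ u : ℝ,
      ‖k u * F (r + u * b) - f r * k u - (f' r * b) * (u * k u)‖
        ≤ b ^ 2 * M * (u ^ 2 * |k u|) := by
    intro u
    by_cases hku : k u = 0
    · simp [hku]
    · have hu : |u| ≤ T := le_of_not_gt fun h => hku (hk_supp u h)
      have hx := hmem u hu
      rw [hFeq _ hx]
      rw [show k u * f (r + u * b) - f r * k u - (f' r * b) * (u * k u)
          = k u * (f (r + u * b) - f r - f' r * ((r + u * b) - r)) by ring]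
      rw [Real.norm_eq_abs, abs_mul]
      calc |k u| * |f (r + u * b) - f r - f' r * ((r + u * b) - r)|
          ≤ |k u| * (M * ((r + u * b) - r) ^ 2) :=
            mul_le_mul_of_nonneg_left (key _ hx) (abs_nonneg _)
        _ = b ^ 2 * M * (u ^ 2 * |k u|) := by ring
  calc |∫ u, (k u * F (r + u * b) - f r * k u - (f' r * b) * (u * k u))|
      = ‖∫ u, (k u * F (r + u * b) - f r * k u - (f' r * b) * (u * k u))‖ :=
        (Real.norm_eq_abs _).symm
    _ ≤ ∫ u, ‖k u * F (r + u * b) - f r * k u - (f' r * b) * (u * k u)‖ :=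
        norm_integral_le_integral_norm _
    _ ≤ ∫ u, b ^ 2 * M * (u ^ 2 * |k u|) :=
        integral_mono hR.norm (h3.const_mul _) hpt
    _ = b ^ 2 * M * ∫ u, u ^ 2 * |k u| := integral_const_mul _ _
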